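/- Let n be a positive integer, let w ∈ ℝⁿ have all positive components, let z ∈ ℝ, let K ⊆ [n], and let α₁,…,αₙ be positive integers. Then ∫_{Δ_{w, z−w·1_K}^∅} ∏_{i=1}^n xᵢ^{αᵢ} dx = ((z − w·1_K)₊^{n+Σᵢαᵢ} · ∏_{i=1}^n αᵢ!) / ((n + Σᵢαᵢ)! · ∏_{i=1}^n wᵢ^{αᵢ+1}). -/

import Mathlib

open MeasureTheory Finset
open scoped ENNReal

lemma oned (b a : ℕ) (t c : ℝ) (hc : 0 < c) (ht : 0 ≤ t) :
    ∫ y in (0:ℝ)..(t/c), y ^ a * (t - c * y) ^ b =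
      t ^ (a + b + 1) * a.factorial * b.factorial /
        ((a + b + 1).factorial * c ^ (a + 1)) := by
  induction a generalizing b with
  | zero =>
    have h1 : ∀ y : ℝ, HasDerivAt (fun y => -(t - c * y) ^ (b+1) / (c * (b+1)))
        ((t - c * y) ^ b) y := by
      intro y
      have : HasDerivAt (fun y : ℝ => t - c * y) (-c) y := by
        simpa using ((hasDerivAt_id y).const_mul c).const_sub t
      have h2 := (this.pow (b+1))
      have h3 := (h2.neg).div_const (c * (b+1))
      refine h3.congr_deriv ?_
      field_simp
      simp only [Nat.add_sub_cancel, Nat.cast_add, Nat.cast_one]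
    have heq : ∫ y in (0:ℝ)..(t/c), y ^ 0 * (t - c * y) ^ b
        = ∫ y in (0:ℝ)..(t/c), (t - c * y) ^ b := by
      congr 1 with y; rw [pow_zero, one_mul]
    rw [heq, intervalIntegral.integral_eq_sub_of_hasDerivAt (fun y _ => h1 y)
      (Continuous.intervalIntegrable (by continuity) _ _)]
    have hz : t - c * (t / c) = 0 := by field_simp; ring
    simp only [hz, zero_pow (Nat.succ_ne_zero b), neg_zero, zero_div, mul_zero, sub_zero]
    simp [Nat.factorial_succ]
    field_simp
  | succ a ih =>
    have key : ∫ y in (0:ℝ)..(t/c), y ^ (a+1) * (t - c * y) ^ b =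
        ((a+1) / (c * (b+1))) * ∫ y in (0:ℝ)..(t/c), y ^ a * (t - c * y) ^ (b+1) := by
      have hu : ∀ y ∈ Set.uIcc (0:ℝ) (t/c), HasDerivAt (fun y : ℝ => y ^ (a+1))
          ((a+1) * y ^ a) y := fun y _ => by
        simpa using hasDerivAt_pow (a+1) y
      have hv : ∀ y ∈ Set.uIcc (0:ℝ) (t/c),
          HasDerivAt (fun y => -(t - c * y) ^ (b+1) / (c * (b+1)))
          ((t - c * y) ^ b) y := by
        intro y _
        have : HasDerivAt (fun y : ℝ => t - c * y) (-c) y := by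
          simpa using ((hasDerivAt_id y).const_mul c).const_sub t
        have h2 := (this.pow (b+1))
        have h3 := (h2.neg).div_const (c * (b+1))
        refine h3.congr_deriv ?_
        field_simp
        simp only [Nat.add_sub_cancel, Nat.cast_add, Nat.cast_one]
      rw [intervalIntegral.integral_mul_deriv_eq_deriv_mul hu hv
        (Continuous.intervalIntegrable (by continuity) _ _)
        (Continuous.intervalIntegrable (by continuity) _ _)]
      have hz : t - c * (t / c) = 0 := by field_simp; ring
      simp only [hz, zero_pow (Nat.succ_ne_zero b), neg_zero, zero_div, mul_zero, zero_pow
        (Nat.succ_ne_zero a)]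
      rw [zero_mul, sub_zero, zero_sub, ← intervalIntegral.integral_neg,
        ← intervalIntegral.integral_const_mul]
      congr 1 with y
      field_simp
    rw [key, ih (b+1)]
    have hb1 : ((b:ℝ)+1) ≠ 0 := by positivity
    rw [show a + (b+1) + 1 = (a+1) + b + 1 by ring]
    rw [Nat.factorial_succ (a), Nat.factorial_succ b]
    push_cast
    field_simp
    ring

lemma measS {n : ℕ} (w : Fin n → ℝ) (t : ℝ) :
    MeasurableSet {x : Fin n → ℝ | (∀ i, 0 ≤ x i) ∧ ∑ i, w i * x i ≤ t} := by
  have h1 : MeasurableSet {x : Fin n → ℝ | ∀ i, 0 ≤ x i} := by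
    rw [Set.setOf_forall]
    exact MeasurableSet.iInter fun i =>
      measurableSet_le measurable_const (measurable_pi_apply i)
  have h2 : MeasurableSet {x : Fin n → ℝ | ∑ i, w i * x i ≤ t} :=
    measurableSet_le (Finset.measurable_sum _ fun i _ =>
      (measurable_pi_apply i).const_mul _) measurable_const
  exact h1.inter h2

lemma aux : ∀ (n : ℕ) (w : Fin n → ℝ), (∀ i, 0 < w i) → ∀ (t : ℝ), 0 ≤ t →
    ∀ (α : Fin n → ℕ) (m : ℕ),
    (∫⁻ x : Fin n → ℝ, {x : Fin n → ℝ | (∀ i, 0 ≤ x i) ∧ ∑ i, w i * x i ≤ t}.indicator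
        (fun x => ENNReal.ofReal ((∏ i, x i ^ α i) * (t - ∑ i, w i * x i) ^ m)) x)
    = ENNReal.ofReal (t ^ (n + ∑ i, α i + m) * m.factorial * (∏ i, ((α i).factorial : ℝ)) /
        (((n + ∑ i, α i + m).factorial : ℝ) * ∏ i, w i ^ (α i + 1))) := by
  intro n
  induction n with
  | zero =>
    intro w hw t ht α m
    have huniv : {x : Fin 0 → ℝ | (∀ i, 0 ≤ x i) ∧ ∑ i, w i * x i ≤ t} = Set.univ := by
      ext x
      simp only [Set.mem_setOf_eq, Set.mem_univ, iff_true, Finset.univ_eq_empty,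
        Finset.sum_empty]
      exact ⟨fun i => i.elim0, ht⟩
    rw [huniv]
    simp only [Set.indicator_univ, Finset.univ_eq_empty, Finset.prod_empty, Finset.sum_empty,
      one_mul, sub_zero, Nat.zero_add, mul_one, Nat.factorial]
    rw [lintegral_const]
    have : (volume : Measure (Fin 0 → ℝ)) Set.univ = 1 := by
      simp [volume_pi, Measure.pi_univ]
    rw [this, mul_one]
    congr 1
    have : (m.factorial : ℝ) ≠ 0 := Nat.cast_ne_zero.2 m.factorial_ne_zero
    field_simp
  | succ n ih =>
    intro w hw t ht α m
    set w' : Fin n → ℝ := fun i => w i.succ with hw'def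
    set α' : Fin n → ℕ := fun i => α i.succ with hα'def
    have hw' : ∀ i, 0 < w' i := fun i => hw i.succ
    have hw0 : 0 < w 0 := hw 0
    set N' : ℕ := n + (∑ i, α' i) + m with hN'
    set C' : ℝ := (m.factorial : ℝ) * (∏ i, ((α' i).factorial : ℝ)) /
      ((N'.factorial : ℝ) * ∏ i, w' i ^ (α' i + 1)) with hC'
    have hC'nn : 0 ≤ C' := by
      apply div_nonneg (by positivity)
      exact mul_nonneg (Nat.cast_nonneg _)
        (Finset.prod_nonneg fun i _ => pow_nonneg (hw' i).le _)
    set S : Set (Fin (n+1) → ℝ) :=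
      {x | (∀ i, 0 ≤ x i) ∧ ∑ i, w i * x i ≤ t} with hS
    set φ : (Fin (n+1) → ℝ) → ℝ≥0∞ := fun x =>
      ENNReal.ofReal ((∏ i, x i ^ α i) * (t - ∑ i, w i * x i) ^ m) with hφ
    -- change of variables to ℝ × (Fin n → ℝ)
    have hcons : ∀ (p : ℝ × (Fin n → ℝ)),
        (MeasurableEquiv.piFinSuccAbove (fun _ : Fin (n+1) => ℝ) 0).symm p =
          Fin.cons p.1 p.2 := by
      intro p
      obtain ⟨y, x⟩ := p
      rw [MeasurableEquiv.piFinSuccAbove_symm_apply]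
      exact Fin.insertNth_zero' y x
    have h1 : (∫⁻ x : Fin (n+1) → ℝ, S.indicator φ x) =
        ∫⁻ p : ℝ × (Fin n → ℝ), S.indicator φ (Fin.cons p.1 p.2) := by
      rw [← ((volume_preserving_piFinSuccAbove (fun _ : Fin (n+1) => ℝ) 0).symm).lintegral_comp_emb
        (MeasurableEquiv.measurableEmbedding _) (S.indicator φ)]
      congr 1 with p
      rw [hcons]
    rw [h1]
    -- Fubini
    have hmeas : Measurable (fun p : ℝ × (Fin n → ℝ) => S.indicator φ (Fin.cons p.1 p.2)) := by
      have hφm : Measurable φ := by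
        apply ENNReal.measurable_ofReal.comp
        apply Measurable.mul
        · exact Finset.measurable_prod _ fun i _ => (measurable_pi_apply i).pow_const _
        · exact ((measurable_const.sub (Finset.measurable_sum _ fun i _ =>
            (measurable_pi_apply i).const_mul _)).pow_const _)
      have hconsm : Measurable (fun p : ℝ × (Fin n → ℝ) => (Fin.cons p.1 p.2 : Fin (n+1) → ℝ)) := by
        rw [measurable_pi_iff]
        intro i
        induction i using Fin.cases with
        | zero => simpa using measurable_fst
        | succ j => simpa [Function.comp_def] using (measurable_pi_apply j).comp measurable_snd
      exact ((hφm.indicator (measS w t)).comp hconsm)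
    rw [Measure.volume_eq_prod, MeasureTheory.lintegral_prod _ hmeas.aemeasurable]
    -- identify the inner integral
    have hinner : ∀ y : ℝ,
        (∫⁻ x : Fin n → ℝ, S.indicator φ (Fin.cons y x)) =
          (Set.Icc (0:ℝ) (t / w 0)).indicator
            (fun y => ENNReal.ofReal (y ^ α 0 * ((t - w 0 * y) ^ N' * C'))) y := by
      intro y
      have hmem : ∀ x : Fin n → ℝ, (Fin.cons y x ∈ S) ↔
          (0 ≤ y ∧ ((∀ i, 0 ≤ x i) ∧ ∑ i, w' i * x i ≤ t - w 0 * y)) := by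
        intro x
        simp only [hS, Set.mem_setOf_eq, Fin.forall_fin_succ, Fin.cons_zero, Fin.cons_succ,
          Fin.sum_univ_succ]
        constructor
        · rintro ⟨⟨hy, hx⟩, hsum⟩
          exact ⟨hy, hx, by linarith⟩
        · rintro ⟨hy, hx, hsum⟩
          exact ⟨⟨hy, hx⟩, by linarith⟩
      have hval : ∀ x : Fin n → ℝ, φ (Fin.cons y x) =
          ENNReal.ofReal (y ^ α 0 *
            ((∏ i, x i ^ α' i) * ((t - w 0 * y) - ∑ i, w' i * x i) ^ m)) := by
        intro x
        simp only [hφ, Fin.prod_univ_succ, Fin.sum_univ_succ, Fin.cons_zero, Fin.cons_succ]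
        congr 1
        ring
      by_cases hy : 0 ≤ y
      · by_cases hyt : w 0 * y ≤ t
        · -- main case: use the inductive hypothesis
          have ht' : (0:ℝ) ≤ t - w 0 * y := by linarith
          have hICC : y ∈ Set.Icc (0:ℝ) (t / w 0) :=
            ⟨hy, (le_div_iff₀ hw0).2 (by linarith [mul_comm (w 0) y])⟩
          rw [Set.indicator_of_mem hICC]
          have step1 : (fun x : Fin n → ℝ => S.indicator φ (Fin.cons y x)) =
              fun x => ENNReal.ofReal (y ^ α 0) *
                ({x : Fin n → ℝ | (∀ i, 0 ≤ x i) ∧ ∑ i, w' i * x i ≤ t - w 0 * y}).indicator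
                  (fun x => ENNReal.ofReal ((∏ i, x i ^ α' i) *
                    ((t - w 0 * y) - ∑ i, w' i * x i) ^ m)) x := by
            funext x
            by_cases hxS : x ∈ {x : Fin n → ℝ | (∀ i, 0 ≤ x i) ∧ ∑ i, w' i * x i ≤ t - w 0 * y}
            · rw [Set.indicator_of_mem ((hmem x).2 ⟨hy, hxS⟩),
                Set.indicator_of_mem hxS, hval x, ENNReal.ofReal_mul (pow_nonneg hy _)]
            · rw [Set.indicator_of_notMem (fun h => hxS ((hmem x).1 h).2),
                Set.indicator_of_notMem hxS, mul_zero]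
          rw [step1, lintegral_const_mul' _ _ ENNReal.ofReal_ne_top,
            ih w' hw' (t - w 0 * y) ht' α' m]
          rw [← ENNReal.ofReal_mul (pow_nonneg hy _)]
          congr 1
          rw [hC', hN']
          ring
        · -- w 0 * y > t : the inner set is empty
          push_neg at hyt
          have hICC : y ∉ Set.Icc (0:ℝ) (t / w 0) := by
            intro hmemI
            exact absurd ((le_div_iff₀ hw0).1 hmemI.2) (by nlinarith)
          rw [Set.indicator_of_notMem hICC]
          have : ∀ x : Fin n → ℝ, S.indicator φ (Fin.cons y x) = 0 := by
            intro x
            apply Set.indicator_of_notMem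
            rw [hmem]
            rintro ⟨-, hx, hsum⟩
            have : 0 ≤ ∑ i, w' i * x i :=
              Finset.sum_nonneg fun i _ => mul_nonneg (hw' i).le (hx i)
            nlinarith
          simp only [this, lintegral_zero]
      · -- y < 0
        have hICC : y ∉ Set.Icc (0:ℝ) (t / w 0) := fun hmemI => hy hmemI.1
        rw [Set.indicator_of_notMem hICC]
        have : ∀ x : Fin n → ℝ, S.indicator φ (Fin.cons y x) = 0 := by
          intro x
          apply Set.indicator_of_notMem
          rw [hmem]
          rintro ⟨hy', -⟩
          exact hy hy'
        simp only [this, lintegral_zero]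
    simp_rw [hinner]
    rw [lintegral_indicator measurableSet_Icc]
    have hcont : Continuous (fun y : ℝ => y ^ α 0 * ((t - w 0 * y) ^ N' * C')) := by
      exact ((continuous_pow (α 0)).mul
        ((((continuous_const.sub (continuous_const.mul continuous_id)).pow N')).mul
          continuous_const))
    have hnn : 0 ≤ᵐ[volume.restrict (Set.Icc (0:ℝ) (t / w 0))]
        fun y : ℝ => y ^ α 0 * ((t - w 0 * y) ^ N' * C') := by
      rw [Filter.EventuallyLE, ae_restrict_iff' measurableSet_Icc]
      apply ae_of_all
      rintro y ⟨hy0, hyt⟩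
      have h1 : 0 ≤ t - w 0 * y := by
        have := (le_div_iff₀ hw0).1 hyt
        nlinarith
      exact mul_nonneg (pow_nonneg hy0 _) (mul_nonneg (pow_nonneg h1 _) hC'nn)
    rw [← MeasureTheory.ofReal_integral_eq_lintegral_ofReal
      (hcont.continuousOn.integrableOn_Icc) hnn]
    rw [MeasureTheory.integral_Icc_eq_integral_Ioc,
      ← intervalIntegral.integral_of_le (div_nonneg ht hw0.le)]
    have heq : ∀ y : ℝ, y ^ α 0 * ((t - w 0 * y) ^ N' * C') =
        C' * (y ^ α 0 * (t - w 0 * y) ^ N') := fun y => by ring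
    simp_rw [heq]
    rw [intervalIntegral.integral_const_mul, oned N' (α 0) t (w 0) hw0 ht]
    congr 1
    have hfac : α 0 + N' + 1 = n + 1 + (∑ i, α i) + m := by
      rw [hN', Fin.sum_univ_succ]
      simp only [hα'def]
      omega
    rw [hfac, hC']
    rw [Fin.sum_univ_succ, Fin.prod_univ_succ, Fin.prod_univ_succ]
    have e1 : ((N'.factorial : ℝ)) ≠ 0 := Nat.cast_ne_zero.2 N'.factorial_ne_zero
    have e2 : ((n + 1 + (∑ i, α i) + m).factorial : ℝ) ≠ 0 :=
      Nat.cast_ne_zero.2 (Nat.factorial_ne_zero _)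
    have e3 : (∏ i, w' i ^ (α' i + 1)) ≠ 0 :=
      ne_of_gt (Finset.prod_pos fun i _ => pow_pos (hw' i) _)
    have e4 : w 0 ^ (α 0 + 1) ≠ 0 := pow_ne_zero _ hw0.ne' 
    simp only [hw'def, hα'def] at e3 ⊢
    field_simp


/-- Exact integration of a monomial over the simplex `Δ_{w, z - w·1_K}^∅`:
`∫_{Δ} ∏ xᵢ^{αᵢ} dx
  = ((z - w·1_K)₊^{n+∑αᵢ} ∏ αᵢ!)/((n+∑αᵢ)! ∏ wᵢ^{αᵢ+1})`. -/
theorem integral_monomial_over_simplex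
    (n : ℕ) (hn : 0 < n) (w : Fin n → ℝ) (hw : ∀ i, 0 < w i) (z : ℝ)
    (K : Finset (Fin n)) (α : Fin n → ℕ) (hα : ∀ i, 0 < α i) :
    (∫ x in {x : Fin n → ℝ | (∀ i, 0 ≤ x i) ∧ ∑ i, w i * x i ≤ z - ∑ i ∈ K, w i},
        ∏ i, x i ^ α i) =
      (max (z - ∑ i ∈ K, w i) 0) ^ (n + ∑ i, α i) * (∏ i, ((α i).factorial : ℝ)) /
        (((n + ∑ i, α i).factorial : ℝ) * ∏ i, w i ^ (α i + 1)) := by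
  set t := z - ∑ i ∈ K, w i with htdef
  by_cases ht : 0 ≤ t
  · have h0 := aux n w hw t ht α 0
    simp only [pow_zero, mul_one, Nat.add_zero, Nat.factorial_zero, Nat.cast_one, one_mul] at h0
    have hnn : 0 ≤ᵐ[volume.restrict {x : Fin n → ℝ | (∀ i, 0 ≤ x i) ∧ ∑ i, w i * x i ≤ t}]
        fun x : Fin n → ℝ => ∏ i, x i ^ α i := by
      rw [Filter.EventuallyLE, ae_restrict_iff' (measS w t)]
      apply ae_of_all
      rintro x ⟨hx, -⟩
      exact Finset.prod_nonneg fun i _ => pow_nonneg (hx i) _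
    have hmeas : AEStronglyMeasurable (fun x : Fin n → ℝ => ∏ i, x i ^ α i)
        (volume.restrict {x : Fin n → ℝ | (∀ i, 0 ≤ x i) ∧ ∑ i, w i * x i ≤ t}) :=
      (Finset.measurable_prod _ fun i _ =>
        (measurable_pi_apply i).pow_const _).aestronglyMeasurable
    rw [MeasureTheory.integral_eq_lintegral_of_nonneg_ae hnn hmeas,
      ← lintegral_indicator (measS w t), h0, ENNReal.toReal_ofReal, max_eq_left ht]
    apply div_nonneg (mul_nonneg (pow_nonneg ht _)
      (Finset.prod_nonneg fun i _ => Nat.cast_nonneg _))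
    exact mul_nonneg (Nat.cast_nonneg _)
      (Finset.prod_nonneg fun i _ => pow_nonneg (hw i).le _)
  · push_neg at ht
    have hempty : {x : Fin n → ℝ | (∀ i, 0 ≤ x i) ∧ ∑ i, w i * x i ≤ t} = ∅ := by
      ext x
      simp only [Set.mem_setOf_eq, Set.mem_empty_iff_false, iff_false]
      rintro ⟨hx, hsum⟩
      have : 0 ≤ ∑ i, w i * x i :=
        Finset.sum_nonneg fun i _ => mul_nonneg (hw i).le (hx i)
      linarith
    rw [hempty, max_eq_right ht.le, zero_pow (by omega), zero_mul, zero_div]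
    simp
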